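/- Let F: ℝ^d → ℝ be differentiable with L-Lipschitz gradient, and let g_1, …, g_N ∈ ℝ^d with nonnegative weights p_1, …, p_N summing to 1, and G = Σ_i p_i g_i. Then for any w ∈ ℝ^d, F(w − G) ≤ F(w) − (1/2)‖∇F(w)‖² + (1/2)Σ_i p_i ‖g_i − ∇F(w)‖² + ((L−1)/2)·Σ_i p_i ‖g_i‖², provided L ≥ 1. -/

import Mathlib

set_option maxHeartbeats 1000000


open scoped RealInnerProductSpace

/-- Descent lemma: for `F` with `L`-Lipschitz gradient,
`F y ≤ F x + ⟪∇F x, y - x⟫ + L/2 ‖y - x‖²`. -/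
lemma descent_lemma_aux {d : ℕ} (F : EuclideanSpace ℝ (Fin d) → ℝ)
    (gradF : EuclideanSpace ℝ (Fin d) → EuclideanSpace ℝ (Fin d))
    (hgrad : ∀ w, HasGradientAt F (gradF w) w)
    (L : ℝ) (hL : 0 ≤ L)
    (hlip : ∀ w w', ‖gradF w - gradF w'‖ ≤ L * ‖w - w'‖)
    (x y : EuclideanSpace ℝ (Fin d)) :
    F y ≤ F x + ⟪gradF x, y - x⟫ + L / 2 * ‖y - x‖ ^ 2 := by
  set v := y - x with hv
  -- continuity of gradF
  have hcont : Continuous gradF := by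
    have : LipschitzWith (Real.toNNReal L) gradF := by
      apply LipschitzWith.of_dist_le_mul
      intro a b
      rw [dist_eq_norm, dist_eq_norm, Real.coe_toNNReal _ hL]
      exact hlip a b
    exact this.continuous
  -- the path and its derivative
  have hline : ∀ t : ℝ, HasDerivAt (fun t : ℝ => x + t • v) v t := by
    intro t
    simpa using ((hasDerivAt_id t).smul_const v).const_add x
  have hphi : ∀ t : ℝ, HasDerivAt (fun t : ℝ => F (x + t • v))
      ⟪gradF (x + t • v), v⟫ t := by
    intro t
    have h1 := (hgrad (x + t • v)).hasFDerivAt.comp_hasDerivAt t (hline t)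
    exact (by simpa [InnerProductSpace.toDual_apply_apply] using h1 :
      HasDerivAt (F ∘ fun t : ℝ => x + t • v) ⟪gradF (x + t • v), v⟫ t)
  have hcont_integrand : Continuous fun t : ℝ => ⟪gradF (x + t • v), v⟫ := by
    apply Continuous.inner
    · exact hcont.comp (by continuity)
    · exact continuous_const
  have hint : IntervalIntegrable (fun t : ℝ => ⟪gradF (x + t • v), v⟫)
      MeasureTheory.volume 0 1 := hcont_integrand.intervalIntegrable 0 1
  have hFTC : F (x + (1:ℝ) • v) - F (x + (0:ℝ) • v)
      = ∫ t in (0:ℝ)..1, ⟪gradF (x + t • v), v⟫ := by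
    rw [intervalIntegral.integral_eq_sub_of_hasDerivAt (fun t _ => hphi t) hint]
  have hy : F y - F x = ∫ t in (0:ℝ)..1, ⟪gradF (x + t • v), v⟫ := by
    simpa [hv] using hFTC
  -- bound the integrand
  have hbound : ∀ t ∈ Set.Icc (0:ℝ) 1,
      ⟪gradF (x + t • v), v⟫ ≤ ⟪gradF x, v⟫ + L * t * ‖v‖ ^ 2 := by
    intro t ht
    have h1 : ⟪gradF (x + t • v), v⟫ - ⟪gradF x, v⟫
        = ⟪gradF (x + t • v) - gradF x, v⟫ := by
      rw [inner_sub_left]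
    have h2 : ⟪gradF (x + t • v) - gradF x, v⟫ ≤ ‖gradF (x + t • v) - gradF x‖ * ‖v‖ :=
      real_inner_le_norm _ _
    have h3 : ‖gradF (x + t • v) - gradF x‖ ≤ L * (t * ‖v‖) := by
      have := hlip (x + t • v) x
      simpa [norm_smul, abs_of_nonneg ht.1, mul_assoc] using this
    have h4 : ‖gradF (x + t • v) - gradF x‖ * ‖v‖ ≤ L * (t * ‖v‖) * ‖v‖ :=
      mul_le_mul_of_nonneg_right h3 (norm_nonneg _)
    nlinarith [norm_nonneg v]
  -- integrate the bound
  have hintbound : (∫ t in (0:ℝ)..1, ⟪gradF (x + t • v), v⟫)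
      ≤ ∫ t in (0:ℝ)..1, (⟪gradF x, v⟫ + L * t * ‖v‖ ^ 2) := by
    apply intervalIntegral.integral_mono_on (by norm_num) hint
    · exact ((by fun_prop : Continuous fun t : ℝ => ⟪gradF x, v⟫ + L * t * ‖v‖ ^ 2).intervalIntegrable 0 1)
    · exact hbound
  have hval : (∫ t in (0:ℝ)..1, (⟪gradF x, v⟫ + L * t * ‖v‖ ^ 2))
      = ⟪gradF x, v⟫ + L / 2 * ‖v‖ ^ 2 := by
    rw [intervalIntegral.integral_add (intervalIntegrable_const)
      ((by fun_prop : Continuous fun t : ℝ => L * t * ‖v‖ ^ 2).intervalIntegrable 0 1)]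
    simp only [intervalIntegral.integral_const, smul_eq_mul]
    have : (∫ t in (0:ℝ)..1, L * t * ‖v‖ ^ 2) = L * ‖v‖ ^ 2 * ∫ t in (0:ℝ)..1, t := by
      rw [← intervalIntegral.integral_const_mul]
      congr 1; ext t; ring
    rw [this, integral_id]
    ring
  have := hy ▸ (hval ▸ hintbound)
  linarith [hy, hval ▸ hintbound]

theorem fedavg_aggregated_bound {d N : ℕ} (F : EuclideanSpace ℝ (Fin d) → ℝ)
    (gradF : EuclideanSpace ℝ (Fin d) → EuclideanSpace ℝ (Fin d))
    (hgrad : ∀ w, HasGradientAt F (gradF w) w)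
    (L : ℝ) (hL : 1 ≤ L)
    (hlip : ∀ w w', ‖gradF w - gradF w'‖ ≤ L * ‖w - w'‖)
    (g : Fin N → EuclideanSpace ℝ (Fin d))
    (p : Fin N → ℝ) (hp : ∀ i, 0 ≤ p i) (hsum : ∑ i, p i = 1) :
    ∀ w : EuclideanSpace ℝ (Fin d),
      F (w - ∑ i, p i • g i) ≤ F w - (1 / 2) * ‖gradF w‖ ^ 2
        + (1 / 2) * ∑ i, p i * ‖g i - gradF w‖ ^ 2
        + ((L - 1) / 2) * ∑ i, p i * ‖g i‖ ^ 2 := by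
  intro w
  set G := ∑ i, p i • g i with hG
  have hdesc := descent_lemma_aux F gradF hgrad L (by linarith) hlip w (w - G)
  have hsub : w - G - w = -G := by abel
  rw [hsub] at hdesc
  have hinner : ⟪gradF w, -G⟫ = -⟪gradF w, G⟫ := by rw [inner_neg_right]
  -- polarization: 2⟪a,b⟫ = ‖a‖² + ‖b‖² - ‖b-a‖²
  have hpol : 2 * ⟪gradF w, G⟫ = ‖gradF w‖ ^ 2 + ‖G‖ ^ 2 - ‖G - gradF w‖ ^ 2 := by
    have := norm_sub_sq_real G (gradF w)
    rw [real_inner_comm] at this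
    linarith
  -- Jensen: convexity of ‖·‖²
  have hconv : ConvexOn ℝ Set.univ (fun x : EuclideanSpace ℝ (Fin d) => ‖x‖ ^ 2) := by
    refine ⟨convex_univ, ?_⟩
    intro x _ y _ a b ha hb hab
    have h1 : ‖a • x + b • y‖ ≤ a * ‖x‖ + b * ‖y‖ := by
      calc ‖a • x + b • y‖ ≤ ‖a • x‖ + ‖b • y‖ := norm_add_le _ _
        _ = a * ‖x‖ + b * ‖y‖ := by
            rw [norm_smul, norm_smul, Real.norm_eq_abs, Real.norm_eq_abs,
              abs_of_nonneg ha, abs_of_nonneg hb]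
    have h2 : ‖a • x + b • y‖ ^ 2 ≤ (a * ‖x‖ + b * ‖y‖) ^ 2 :=
      pow_le_pow_left₀ (norm_nonneg _) h1 2
    simp only [smul_eq_mul]
    nlinarith [norm_nonneg x, norm_nonneg y, sq_nonneg (‖x‖ - ‖y‖),
      mul_nonneg ha hb]
  have hjensen1 : ‖G‖ ^ 2 ≤ ∑ i, p i * ‖g i‖ ^ 2 := by
    have := hconv.map_sum_le (t := Finset.univ) (fun i _ => hp i) hsum
      (fun i _ => Set.mem_univ (g i))
    simpa [smul_eq_mul] using this
  have hjensen2 : ‖G - gradF w‖ ^ 2 ≤ ∑ i, p i * ‖g i - gradF w‖ ^ 2 := by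
    have h1 : G - gradF w = ∑ i, p i • (g i - gradF w) := by
      simp [hG, smul_sub, Finset.sum_sub_distrib, ← Finset.sum_smul, hsum]
    rw [h1]
    have := hconv.map_sum_le (t := Finset.univ) (p := fun i => g i - gradF w)
      (fun i _ => hp i) hsum (fun i _ => Set.mem_univ _)
    simpa [smul_eq_mul] using this
  have h1 : ‖-G‖ ^ 2 = ‖G‖ ^ 2 := by rw [norm_neg]
  rw [h1] at hdesc
  rw [hinner] at hdesc
  have hLG : L / 2 * ‖G‖ ^ 2 = 1 / 2 * ‖G‖ ^ 2 + (L - 1) / 2 * ‖G‖ ^ 2 := by ring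
  have hG2 : (L - 1) / 2 * ‖G‖ ^ 2 ≤ (L - 1) / 2 * ∑ i, p i * ‖g i‖ ^ 2 :=
    mul_le_mul_of_nonneg_left hjensen1 (by linarith)
  have hGd : 1 / 2 * ‖G - gradF w‖ ^ 2 ≤ 1 / 2 * ∑ i, p i * ‖g i - gradF w‖ ^ 2 :=
    mul_le_mul_of_nonneg_left hjensen2 (by norm_num)
  linarith
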